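/- Let n ≥ 2, 0 < p < n/2 real, and f an even continuous function on S^{n−1} with spherical harmonic expansion f = Σ_{m even} H_m satisfying ‖H₂‖₂ ≤ δ‖f‖₂ and ∫ f dσ = 0 (no degree-0 term). Define I_p f = Σ_{m even} λ_m(n,p) H_m with λ_m(n,p) = Γ((n−p)/2)Γ((m+p)/2)/(Γ(p/2)Γ((m+n−p)/2)). Then (n(n−p)/(2p²))·‖I_p f‖₂² ≤ (n(n−p)/(2p²))·(λ₂(n,p)² − λ₄(n,p)²)·δ²‖f‖₂² + (n/(2(n−p)))·((p+2)²/(n−p+2)²)·‖f‖₂². -/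

import Mathlib

open Real

/-- Spectral-gap estimate for `I_p`, `0 < p < n/2`. Writing `c m = ‖H_m‖₂` for the norms of
the spherical harmonic components of the even function `f` (so `c m = 0` for odd `m`,
`c 0 = 0` since `∫ f dσ = 0`, `‖f‖₂² = ∑ c_m²`, `‖I_p f‖₂² = ∑ λ_m(n,p)² c_m²`), if
`‖H₂‖₂ ≤ δ ‖f‖₂`, then
`(n(n−p)/(2p²)) ‖I_p f‖₂² ≤ (n(n−p)/(2p²))(λ₂²−λ₄²) δ² ‖f‖₂²
  + (n/(2(n−p))) ((p+2)²/(n−p+2)²) ‖f‖₂²`. -/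
theorem Ip_spectral_gap (n : ℕ) (hn : 2 ≤ n) (p : ℝ) (hp : 0 < p) (hpn : p < (n : ℝ) / 2)
    (lam : ℕ → ℝ)
    (hlam : ∀ m : ℕ, lam m =
      Real.Gamma (((n : ℝ) - p) / 2) * Real.Gamma (((m : ℝ) + p) / 2) /
        (Real.Gamma (p / 2) * Real.Gamma (((m : ℝ) + (n : ℝ) - p) / 2)))
    (c : ℕ → ℝ) (hcnonneg : ∀ m, 0 ≤ c m) (hceven : ∀ m : ℕ, ¬Even m → c m = 0)
    (hc0 : c 0 = 0) (hsum : Summable fun m : ℕ => c m ^ 2)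
    (δ : ℝ) (hδ : 0 ≤ δ) (h2 : c 2 ≤ δ * Real.sqrt (∑' m : ℕ, c m ^ 2)) :
    (n : ℝ) * ((n : ℝ) - p) / (2 * p ^ 2) * ∑' m : ℕ, (lam m * c m) ^ 2 ≤
      (n : ℝ) * ((n : ℝ) - p) / (2 * p ^ 2) * (lam 2 ^ 2 - lam 4 ^ 2) * δ ^ 2 *
          (∑' m : ℕ, c m ^ 2) +
        (n : ℝ) / (2 * ((n : ℝ) - p)) * ((p + 2) ^ 2 / ((n : ℝ) - p + 2) ^ 2) *
          (∑' m : ℕ, c m ^ 2) := by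
  have hn0 : (0:ℝ) < n := by positivity
  have hnp : p < (n:ℝ) - p := by linarith
  have hnp0 : (0:ℝ) < (n:ℝ) - p := by linarith
  -- positivity of lam
  have lam_pos : ∀ m : ℕ, 0 < lam m := by
    intro m
    rw [hlam m]
    have h1 : 0 < Real.Gamma (((n:ℝ) - p) / 2) := Real.Gamma_pos_of_pos (by linarith)
    have h2 : 0 < Real.Gamma (((m:ℝ) + p) / 2) := Real.Gamma_pos_of_pos (by positivity)
    have h3 : 0 < Real.Gamma (p / 2) := Real.Gamma_pos_of_pos (by positivity)
    have h4 : 0 < Real.Gamma (((m:ℝ) + (n:ℝ) - p) / 2) := by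
      apply Real.Gamma_pos_of_pos
      have := (Nat.cast_nonneg m : (0:ℝ) ≤ m); linarith
    positivity
  -- recurrence
  have lam_rec : ∀ m : ℕ, lam (m + 2) = (((m:ℝ) + p) / ((m:ℝ) + (n:ℝ) - p)) * lam m := by
    intro m
    have hx : (0:ℝ) < ((m:ℝ) + (n:ℝ) - p) := by
      have := (Nat.cast_nonneg m : (0:ℝ) ≤ m); linarith
    have e1 : (((m + 2 : ℕ) : ℝ) + p) / 2 = ((m:ℝ) + p) / 2 + 1 := by push_cast; ring
    have e2 : (((m + 2 : ℕ) : ℝ) + (n:ℝ) - p) / 2 = ((m:ℝ) + (n:ℝ) - p) / 2 + 1 := by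
      push_cast; ring
    rw [hlam (m + 2), hlam m, e1, e2,
      Real.Gamma_add_one (by positivity : ((m:ℝ) + p) / 2 ≠ 0),
      Real.Gamma_add_one (show ((m:ℝ) + (n:ℝ) - p) / 2 ≠ 0 from ne_of_gt (by linarith))]
    have h2 : Real.Gamma (((m:ℝ) + p) / 2) ≠ 0 :=
      (Real.Gamma_pos_of_pos (by positivity)).ne'
    have h4 : Real.Gamma (((m:ℝ) + (n:ℝ) - p) / 2) ≠ 0 :=
      (Real.Gamma_pos_of_pos (by linarith)).ne'
    have h3 : Real.Gamma (p / 2) ≠ 0 := (Real.Gamma_pos_of_pos (by positivity)).ne'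
    field_simp
  -- decreasing in steps of 2
  have lam_dec : ∀ m : ℕ, lam (m + 2) ≤ lam m := by
    intro m
    rw [lam_rec m]
    have hx : (0:ℝ) < ((m:ℝ) + (n:ℝ) - p) := by
      have := (Nat.cast_nonneg m : (0:ℝ) ≤ m); linarith
    have hr : ((m:ℝ) + p) / ((m:ℝ) + (n:ℝ) - p) ≤ 1 := by
      rw [div_le_one hx]; linarith
    calc (((m:ℝ) + p) / ((m:ℝ) + (n:ℝ) - p)) * lam m ≤ 1 * lam m :=
          mul_le_mul_of_nonneg_right hr (lam_pos m).le
      _ = lam m := one_mul _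
  have lam_le : ∀ k m : ℕ, lam (m + 2 * k) ≤ lam m := by
    intro k
    induction k with
    | zero => intro m; simp
    | succ k ih =>
        intro m
        have he : m + 2 * (k + 1) = (m + 2 * k) + 2 := by ring
        rw [he]
        exact (lam_dec (m + 2 * k)).trans (ih m)
  -- explicit values
  have lam0_eq : lam 0 = 1 := by
    rw [hlam 0]
    have h3 : Real.Gamma (p / 2) ≠ 0 := (Real.Gamma_pos_of_pos (by positivity)).ne'
    have h1 : Real.Gamma (((n:ℝ) - p) / 2) ≠ 0 :=
      (Real.Gamma_pos_of_pos (by linarith)).ne'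
    have e1 : (((0:ℕ):ℝ) + p) / 2 = p / 2 := by norm_num
    have e2 : (((0:ℕ):ℝ) + (n:ℝ) - p) / 2 = ((n:ℝ) - p) / 2 := by norm_num
    rw [e1, e2]
    field_simp
  have lam2_eq : lam 2 = p / ((n:ℝ) - p) := by
    rw [show (2:ℕ) = 0 + 2 from rfl, lam_rec 0, lam0_eq]
    norm_num
  have lam4_eq : lam 4 = ((2 + p) / (2 + (n:ℝ) - p)) * lam 2 := by
    rw [show (4:ℕ) = 2 + 2 from rfl, lam_rec 2]
    norm_num
  set S := ∑' m : ℕ, c m ^ 2 with hS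
  have hS0 : 0 ≤ S := tsum_nonneg fun m => by positivity
  -- termwise bound
  have term_le : ∀ m : ℕ, (lam m * c m) ^ 2 ≤
      lam 4 ^ 2 * c m ^ 2 + (if m = 2 then (lam 2 ^ 2 - lam 4 ^ 2) * c 2 ^ 2 else 0) := by
    intro m
    by_cases hm2 : m = 2
    · subst hm2
      simp only [if_pos]
      nlinarith [sq_nonneg (lam 2 * c 2)]
    · rw [if_neg hm2, add_zero]
      rcases Nat.even_or_odd m with he | ho
      · rcases Nat.eq_zero_or_pos m with h0 | hpos
        · subst h0; simp [hc0]
        · obtain ⟨j, hj⟩ := he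
          obtain ⟨k, hk⟩ : ∃ k, m = 4 + 2 * k := ⟨j - 2, by omega⟩
          have h4 : lam m ≤ lam 4 := by
            rw [hk, show 4 + 2 * k = 4 + 2 * k from rfl]
            exact lam_le k 4
          have : lam m ^ 2 ≤ lam 4 ^ 2 :=
            pow_le_pow_left₀ (lam_pos m).le h4 2
          nlinarith [sq_nonneg (c m), lam_pos m, lam_pos 4]
      · have hcm : c m = 0 := hceven m (Nat.not_even_iff_odd.mpr ho)
        simp [hcm]
  -- summability of the dominating sequence
  have hind : Summable (fun m : ℕ => if m = 2 then (lam 2 ^ 2 - lam 4 ^ 2) * c 2 ^ 2 else 0) :=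
    (hasSum_ite_eq 2 _).summable
  have hDsum : Summable (fun m : ℕ =>
      lam 4 ^ 2 * c m ^ 2 + (if m = 2 then (lam 2 ^ 2 - lam 4 ^ 2) * c 2 ^ 2 else 0)) :=
    (hsum.mul_left _).add hind
  have hLsum : Summable (fun m : ℕ => (lam m * c m) ^ 2) :=
    Summable.of_nonneg_of_le (fun m => sq_nonneg _) term_le hDsum
  have htsum : (∑' m : ℕ, (lam m * c m) ^ 2) ≤
      lam 4 ^ 2 * S + (lam 2 ^ 2 - lam 4 ^ 2) * c 2 ^ 2 := by
    calc (∑' m : ℕ, (lam m * c m) ^ 2)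
        ≤ ∑' m : ℕ, (lam 4 ^ 2 * c m ^ 2 +
            (if m = 2 then (lam 2 ^ 2 - lam 4 ^ 2) * c 2 ^ 2 else 0)) :=
          hLsum.tsum_le_tsum term_le hDsum
      _ = lam 4 ^ 2 * S + (lam 2 ^ 2 - lam 4 ^ 2) * c 2 ^ 2 := by
          rw [(hsum.mul_left _).tsum_add hind, tsum_mul_left, tsum_ite_eq]
  -- c 2 ^ 2 ≤ δ ^ 2 * S
  have hc2sq : c 2 ^ 2 ≤ δ ^ 2 * S := by
    have := pow_le_pow_left₀ (hcnonneg 2) h2 2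
    rwa [mul_pow, Real.sq_sqrt hS0] at this
  -- lam 4 ≤ lam 2
  have h42 : lam 4 ^ 2 ≤ lam 2 ^ 2 := by
    have := lam_dec 2
    exact pow_le_pow_left₀ (lam_pos 4).le (by simpa using this) 2
  set A := (n:ℝ) * ((n:ℝ) - p) / (2 * p ^ 2) with hA
  have hA0 : 0 < A := by positivity
  -- the key identity
  have hid : A * lam 4 ^ 2 =
      (n:ℝ) / (2 * ((n:ℝ) - p)) * ((p + 2) ^ 2 / ((n:ℝ) - p + 2) ^ 2) := by
    rw [hA, lam4_eq, lam2_eq]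
    have h1 : (n:ℝ) - p ≠ 0 := hnp0.ne'
    have h2 : (2 + (n:ℝ) - p) ≠ 0 := ne_of_gt (by linarith)
    have h3 : ((n:ℝ) - p + 2) ≠ 0 := ne_of_gt (by linarith)
    field_simp
    ring
  calc A * ∑' m : ℕ, (lam m * c m) ^ 2
      ≤ A * (lam 4 ^ 2 * S + (lam 2 ^ 2 - lam 4 ^ 2) * c 2 ^ 2) :=
        mul_le_mul_of_nonneg_left htsum hA0.le
    _ = A * lam 4 ^ 2 * S + A * ((lam 2 ^ 2 - lam 4 ^ 2) * c 2 ^ 2) := by ring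
    _ ≤ A * lam 4 ^ 2 * S + A * ((lam 2 ^ 2 - lam 4 ^ 2) * (δ ^ 2 * S)) := by
        refine add_le_add le_rfl ?_
        exact mul_le_mul_of_nonneg_left
          (mul_le_mul_of_nonneg_left hc2sq (by linarith)) hA0.le
    _ = A * (lam 2 ^ 2 - lam 4 ^ 2) * δ ^ 2 * S + A * lam 4 ^ 2 * S := by ring
    _ = A * (lam 2 ^ 2 - lam 4 ^ 2) * δ ^ 2 * S +
        (n:ℝ) / (2 * ((n:ℝ) - p)) * ((p + 2) ^ 2 / ((n:ℝ) - p + 2) ^ 2) * S := by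
        rw [hid]
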